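/- Let M be symmetric PSD with top unit eigenvector v₁ and top eigenvalue λ₁. Suppose x is an eigenvector of M with eigenvalue λ = ‖x‖₂² < λ₁. Then v₁ᵀ(2xxᵀ − M + ‖x‖₂² I)v₁ = λ − λ₁ < 0, so the Hessian of g(x) = (1/2)‖M − xxᵀ‖_F² at x is not positive semidefinite and x is not a local minimum of g. -/

import Mathlib

open Matrix Finset

lemma stmt2_expand {d : ℕ} (M : Matrix (Fin d) (Fin d) ℝ) (y : Fin d → ℝ) :
    ∑ i, ∑ j, (M i j - y i * y j)^2
      = ∑ i, ∑ j, (M i j)^2 - 2 * (y ⬝ᵥ M *ᵥ y) + (∑ i, y i^2)^2 := by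
  have h1 : (∑ i, y i^2)^2 = ∑ i, ∑ j, y i ^2 * y j ^2 := by
    rw [sq, Finset.sum_mul_sum]
  have h2 : y ⬝ᵥ M *ᵥ y = ∑ i, ∑ j, y i * (M i j * y j) := by
    simp [dotProduct, mulVec, Finset.mul_sum]
  rw [h1, h2, Finset.mul_sum, ← Finset.sum_sub_distrib, ← Finset.sum_add_distrib]
  refine Finset.sum_congr rfl fun i _ => ?_
  rw [Finset.mul_sum, ← Finset.sum_sub_distrib, ← Finset.sum_add_distrib]
  refine Finset.sum_congr rfl fun j _ => by ring

/-- If v₁ is a unit top eigenvector of the symmetric PSD matrix M with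
eigenvalue λ₁, and x is an eigenvector with eigenvalue λ = ‖x‖₂² < λ₁, then
v₁ᵀ(2xxᵀ − M + ‖x‖₂² I)v₁ = λ − λ₁ < 0, the Hessian of g at x is not PSD, and x is
not a local minimum of g(x) = (1/2)‖M − xxᵀ‖_F². -/
theorem stmt2 {d : ℕ} (M : Matrix (Fin d) (Fin d) ℝ)
    (hSymm : M.IsSymm) (hPSD : M.PosSemidef)
    (v1 : Fin d → ℝ) (lam1 lam : ℝ)
    (hv1unit : ∑ i, v1 i ^ 2 = 1)
    (hv1eig : M.mulVec v1 = lam1 • v1)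
    (x : Fin d → ℝ) (hx : x ≠ 0)
    (hlam : lam = ∑ i, x i ^ 2)
    (hxeig : M.mulVec x = lam • x)
    (hlt : lam < lam1) :
    v1 ⬝ᵥ ((2 : ℝ) • vecMulVec x x - M + (∑ i, x i ^ 2) • (1 : Matrix (Fin d) (Fin d) ℝ)).mulVec v1
        = lam - lam1 ∧
      lam - lam1 < 0 ∧
      ¬ ((2 : ℝ) • vecMulVec x x - M + (∑ i, x i ^ 2) • (1 : Matrix (Fin d) (Fin d) ℝ)).PosSemidef ∧
      ¬ IsLocalMin (fun y : Fin d → ℝ => (1 / 2 : ℝ) * ∑ i, ∑ j, (M i j - y i * y j) ^ 2) x := by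
  -- orthogonality
  have horth : v1 ⬝ᵥ x = 0 := by
    have h1 : lam * (v1 ⬝ᵥ x) = lam1 * (v1 ⬝ᵥ x) := by
      calc lam * (v1 ⬝ᵥ x) = v1 ⬝ᵥ (M.mulVec x) := by
            rw [hxeig]; simp [dotProduct_smul, smul_eq_mul]
        _ = (M.mulVec v1) ⬝ᵥ x := by
            rw [dotProduct_mulVec, ← vecMul_transpose, hSymm.eq]
        _ = lam1 * (v1 ⬝ᵥ x) := by rw [hv1eig]; simp [smul_dotProduct, smul_eq_mul]
    have h0 := sub_eq_zero.mpr h1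
    have h2 : (lam - lam1) * (v1 ⬝ᵥ x) = 0 := by ring_nf; linarith [h0]
    rcases mul_eq_zero.mp h2 with h | h
    · linarith [sub_lt_zero.mpr hlt, h]
    · exact h
  have hvv : v1 ⬝ᵥ v1 = 1 := by simpa [dotProduct, sq] using hv1unit
  have hxv : x ⬝ᵥ v1 = 0 := by rwa [dotProduct_comm]
  -- part 1
  have hpart1 : v1 ⬝ᵥ ((2 : ℝ) • vecMulVec x x - M
      + (∑ i, x i ^ 2) • (1 : Matrix (Fin d) (Fin d) ℝ)).mulVec v1 = lam - lam1 := by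
    have hvm : vecMulVec x x *ᵥ v1 = 0 := by
      ext i
      simpa [mulVec, vecMulVec_apply, dotProduct, mul_assoc, ← Finset.mul_sum]
        using Or.inr hxv
    rw [add_mulVec, sub_mulVec, smul_mulVec, smul_mulVec, one_mulVec,
      hvm, hv1eig]
    simp [dotProduct_add, dotProduct_sub, dotProduct_smul, horth, hvv, hlam, smul_eq_mul]
    ring
  have hneg : lam - lam1 < 0 := sub_lt_zero.mpr hlt
  refine ⟨hpart1, hneg, ?_, ?_⟩
  · -- not PSD
    intro hP
    have := hP.dotProduct_mulVec_nonneg v1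
    simp only [RCLike.re_to_real, star_trivial] at this
    rw [hpart1] at this
    linarith
  · -- not local min
    intro hmin
    set f : (Fin d → ℝ) → ℝ :=
      fun y => (1 / 2 : ℝ) * ∑ i, ∑ j, (M i j - y i * y j) ^ 2 with hf
    -- value along x + t • v1
    have hval : ∀ t : ℝ, f (x + t • v1) - f x = t^2 * (lam - lam1) + t^4 / 2 := by
      intro t
      have hQ : (x + t • v1) ⬝ᵥ M *ᵥ (x + t • v1) = lam * lam + t^2 * lam1 := by
        rw [mulVec_add, mulVec_smul, hxeig, hv1eig]
        simp [dotProduct_add, add_dotProduct, smul_dotProduct, dotProduct_smul,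
          horth, hxv, hvv, smul_eq_mul]
        have hxx : x ⬝ᵥ x = lam := by simp [dotProduct, sq, hlam]
        rw [hxx]; ring
      have hS : ∑ i, (x + t • v1) i ^ 2 = lam + t^2 := by
        have : ∑ i, (x + t • v1) i ^ 2 = x ⬝ᵥ x + 2 * t * (x ⬝ᵥ v1) + t^2 * (v1 ⬝ᵥ v1) := by
          simp only [Pi.add_apply, Pi.smul_apply, smul_eq_mul, dotProduct,
            Finset.mul_sum, ← Finset.sum_add_distrib]
          exact Finset.sum_congr rfl fun i _ => by ring
        rw [this, hxv, hvv]
        have hxx : x ⬝ᵥ x = lam := by simp [dotProduct, sq, hlam]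
        rw [hxx]; ring
      have hQ0 : x ⬝ᵥ M *ᵥ x = lam * lam := by
        rw [hxeig]
        have hxx : x ⬝ᵥ x = lam := by simp [dotProduct, sq, hlam]
        simp [dotProduct_smul, smul_eq_mul, hxx]
      have hS0 : ∑ i, x i ^ 2 = lam := hlam.symm
      rw [hf]
      simp only
      rw [stmt2_expand M (x + t • v1), stmt2_expand M x, hQ, hS, hQ0, hS0]
      ring
    -- from local min, get ε ball
    have hcont : Filter.Tendsto (fun t : ℝ => x + t • v1) (nhds 0) (nhds x) := by
      have : Continuous fun t : ℝ => x + t • v1 := by continuity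
      have h0 : x + (0:ℝ) • v1 = x := by simp
      simpa [h0] using this.tendsto 0
    have hev : ∀ᶠ t : ℝ in nhds 0, f x ≤ f (x + t • v1) := hcont.eventually hmin
    rcases Metric.eventually_nhds_iff.mp hev with ⟨ε, hε, hball⟩
    set δ := Real.sqrt (lam1 - lam) with hδ
    have hδpos : 0 < δ := Real.sqrt_pos.mpr (by linarith)
    set t := min (ε / 2) (δ / 2) with ht
    have htpos : 0 < t := lt_min (by linarith) (by linarith)
    have htε : dist t (0:ℝ) < ε := by
      rw [Real.dist_eq, sub_zero, abs_of_pos htpos]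
      calc t ≤ ε / 2 := min_le_left _ _
        _ < ε := by linarith
    have hle := hball htε
    have htδ : t ≤ δ / 2 := min_le_right _ _
    have hδsq : δ^2 = lam1 - lam := Real.sq_sqrt (by linarith)
    have hnegval : f (x + t • v1) - f x < 0 := by
      rw [hval t]
      have ht2 : t^2 ≤ (lam1 - lam)/4 := by nlinarith [htpos, htδ, hδsq]
      nlinarith [mul_pos htpos htpos, mul_le_mul_of_nonneg_left ht2 (sq_nonneg t)]
    linarith
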